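/- arXiv:math/9805106 — 4 statements merged into one kernel-verified Lean document; each statement's English description precedes it below -/
import Mathlib

section
/- Let P be a polynomial with integer coefficients of degree at most r-1 (r > 2), with the sum of absolute values of its coefficients equal to D. Suppose P(e^{2πi/r}) is a nonzero real number. Then for every prime p > D^{φ(r)/2} with p not dividing r, and every primitive r-th root of unity ζ in an algebraic closure of F_p, one has P(ζ) ≠ 0. -/
open Polynomial Complex

open IsCyclotomicExtension IntermediateField

set_option maxHeartbeats 2000000 in
/-- **Lemma 4.1.** Let `P ∈ ℤ[x]` have degree at most `r - 1` (`r > 2`), and let `D` be the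
sum of the absolute values of its coefficients. Suppose `P(e^{2πi/r})` is a nonzero real
number. Then for every prime `p > D^{φ(r)/2}` not dividing `r` and every primitive `r`-th
root of unity `ζ` in an algebraic closure of `F_p`, one has `P(ζ) ≠ 0`. -/
theorem statement0 (r : ℕ) (hr : 2 < r) (P : Polynomial ℤ)
    (hdeg : P.natDegree ≤ r - 1)
    (D : ℕ) (hD : D = ∑ i ∈ P.support, (P.coeff i).natAbs)
    (hreal : (Polynomial.aeval (Complex.exp (2 * Real.pi * Complex.I / r)) P).im = 0)
    (hne : Polynomial.aeval (Complex.exp (2 * Real.pi * Complex.I / r)) P ≠ 0)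
    (p : ℕ) [hp : Fact p.Prime] (hpD : (D : ℝ) ^ ((Nat.totient r : ℝ) / 2) < (p : ℝ))
    (hpr : ¬ p ∣ r)
    (ζ : AlgebraicClosure (ZMod p)) (hζ : IsPrimitiveRoot ζ r) :
    Polynomial.aeval ζ P ≠ 0 := by
  intro h0
  have hr0 : 0 < r := by omega
  set μ : ℂ := Complex.exp (2 * Real.pi * Complex.I / r) with hμdef
  have hμ : IsPrimitiveRoot μ r := Complex.isPrimitiveRoot_exp r hr0.ne'
  set n : ℕ+ := ⟨r, hr0⟩ with hn
  set K := CyclotomicField n ℚ with hK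
  haveI : NeZero (n:ℕ) := ⟨n.ne_zero⟩
  haveI : IsCyclotomicExtension {(n:ℕ)} ℚ K := by
    exact CyclotomicField.isCyclotomicExtension _ _
  have hirr : Irreducible (Polynomial.cyclotomic n ℚ) := Polynomial.cyclotomic.irreducible_rat n.pos
  set ζK : K := IsCyclotomicExtension.zeta n ℚ K with hζKdef
  have hζK : IsPrimitiveRoot ζK n := IsCyclotomicExtension.zeta_spec n ℚ K
  haveI : FiniteDimensional ℚ K := IsCyclotomicExtension.finiteDimensional {(n:ℕ)} ℚ K
  haveI : IsGalois ℚ K := IsCyclotomicExtension.isGalois {(n:ℕ)} ℚ K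
  -- the embedding sending ζK to μ
  have hμmem : μ ∈ primitiveRoots (n : ℕ) ℂ := (mem_primitiveRoots n.pos).mpr hμ
  set E := hζK.embeddingsEquivPrimitiveRoots ℂ hirr with hE
  set φ₀ : K →ₐ[ℚ] ℂ := E.symm ⟨μ, hμmem⟩ with hφ₀def
  have hφ₀ζ : φ₀ ζK = μ := by
    have := hζK.embeddingsEquivPrimitiveRoots_apply_coe ℂ hirr φ₀
    rw [hφ₀def] at this ⊢
    rw [← this, hE, Equiv.apply_symm_apply]
  -- σ commutes with aeval
  have key : ∀ σ : K →ₐ[ℚ] ℂ, σ (Polynomial.aeval ζK P) = Polynomial.aeval (σ ζK) P := by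
    intro σ
    rw [Polynomial.aeval_def, Polynomial.aeval_def]
    refine (Polynomial.hom_eval₂ P (algebraMap ℤ K) σ.toRingHom ζK).trans ?_
    congr 1
    exact RingHom.ext_int _ _
  set α : K := Polynomial.aeval ζK P with hα
  have hφα : φ₀ α = Polynomial.aeval μ P := by rw [hα, key φ₀, hφ₀ζ]
  have hα0 : α ≠ 0 := by
    intro h
    apply hne
    rw [← hφα, h, map_zero]
  -- conjugation automorphism
  set c : K ≃ₐ[ℚ] K := (IsCyclotomicExtension.autEquivPow K hirr).symm (-1) with hcdef
  have hcpow : hζK.autToPow ℚ c = -1 := by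
    have := (IsCyclotomicExtension.autEquivPow K hirr).apply_symm_apply (-1)
    rw [← hcdef] at this
    rw [← this]
    rfl
  have hval : ((-1 : (ZMod (n:ℕ))ˣ) : ZMod (n:ℕ)).val = r - 1 := by
    have h1 : ((-1 : (ZMod (n:ℕ))ˣ) : ZMod (n:ℕ)) = -1 := by simp
    rw [h1]
    have h3 : ((r - 1 : ℕ) : ZMod (n:ℕ)) = -1 := by
      rw [Nat.cast_sub (show 1 ≤ r by omega), show ((r:ℕ) : ZMod (n:ℕ)) = 0 from ZMod.natCast_self (n:ℕ), Nat.cast_one, zero_sub]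
    rw [← h3]; exact ZMod.val_natCast_of_lt (Nat.sub_lt hr0 one_pos : r - 1 < (n:ℕ))
  have hcζ : c ζK = ζK ^ (r - 1) := by
    have := hζK.autToPow_spec ℚ c
    rw [hcpow] at this
    rw [← this, hval]
  -- conj μ = μ ^ (r-1)
  have hμne : μ ≠ 0 := Complex.exp_ne_zero _
  have h2 : μ * (starRingEnd ℂ) μ = 1 := by
    have hconjz : (starRingEnd ℂ) (2*(Real.pi:ℂ)*I/(r:ℂ)) = -(2*(Real.pi:ℂ)*I/(r:ℂ)) := by
      rw [map_div₀, map_mul, map_mul, Complex.conj_I]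
      simp only [Complex.conj_ofReal, map_ofNat, Complex.conj_natCast]
      ring
    rw [hμdef, ← Complex.exp_conj, hconjz, ← Complex.exp_add, add_neg_cancel, Complex.exp_zero]
  have h1 : μ * μ ^ (r-1) = 1 := by
    rw [← pow_succ']
    rw [show r - 1 + 1 = r by omega]
    exact hμ.pow_eq_one
  have hconjμ : (starRingEnd ℂ) μ = μ ^ (r - 1) := mul_left_cancel₀ hμne (h2.trans h1.symm)
  -- c α = α
  have hψχ : φ₀.comp (c : K →ₐ[ℚ] K) = ((starRingEnd ℂ).comp φ₀.toRingHom).toRatAlgHom := by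
    apply E.injective
    apply Subtype.ext
    rw [hE, hζK.embeddingsEquivPrimitiveRoots_apply_coe, hζK.embeddingsEquivPrimitiveRoots_apply_coe]
    show φ₀ (c ζK) = (starRingEnd ℂ) (φ₀ ζK)
    rw [hcζ, map_pow, hφ₀ζ, hconjμ]
  have hcα : c α = α := by
    apply φ₀.toRingHom.injective
    have e1 : φ₀ (c α) = (starRingEnd ℂ) (φ₀ α) := by
      have := congrArg (fun f => f α) hψχ
      simpa using this
    show φ₀ (c α) = φ₀ α
    rw [e1, hφα, Complex.conj_eq_iff_im.mpr hreal]
  -- fixed field of conjugation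
  classical
  set H : Subgroup (K ≃ₐ[ℚ] K) := Subgroup.zpowers c with hHdef
  have hcne : c ≠ 1 := by
    intro h
    rw [h, map_one] at hcpow
    rw [← hcpow] at hval
    rw [Units.val_one] at hval
    haveI : Fact (1 < (n:ℕ)) := ⟨show 1 < r by omega⟩
    rw [ZMod.val_one] at hval
    omega
  have hc2 : c ^ 2 = 1 := hζK.autToPow_injective ℚ (by rw [map_pow, hcpow, map_one, neg_one_sq])
  have horder : orderOf c = 2 := orderOf_eq_prime hc2 hcne
  have hαF : α ∈ IntermediateField.fixedField H := by
    show α ∈ MulAction.fixedPoints H K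
    rw [MulAction.mem_fixedPoints]
    rintro ⟨g, hg⟩
    have hgα : g • α = α := Subgroup.zpowers_le.mpr (MulAction.mem_stabilizer_iff.mpr hcα) hg
    exact hgα
  set F := IntermediateField.fixedField H with hFdef
  set α' : F := ⟨α, hαF⟩ with hα'def
  have hrank2 : Module.finrank F K = 2 := by
    rw [hFdef, IntermediateField.finrank_fixedField_eq_card]
    show Nat.card (Subgroup.zpowers c) = 2
    rw [Nat.card_zpowers, horder]
  haveI : Algebra.IsSeparable ℚ K := IsGalois.to_isSeparable
  haveI : Algebra.IsSeparable ℚ F := Algebra.isSeparable_tower_bot_of_isSeparable ℚ F K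
  have hnorm2 : Algebra.norm ℚ α = (Algebra.norm ℚ α') ^ 2 := by
    have h1 : Algebra.norm (↥F) α = α' ^ 2 := by
      have e : α = algebraMap F K α' := rfl
      rw [e, Algebra.norm_algebraMap, hrank2]
    rw [← Algebra.norm_norm (R := ℚ) (S := ↥F) (a := α), h1, map_pow]
  -- integrality
  have hζint : IsIntegral ℤ ζK := hζK.isIntegral n.pos
  have hαint : IsIntegral ℤ α := by
    refine IsIntegral.of_mem_of_fg (Algebra.adjoin ℤ ({ζK} : Set K))
      hζint.fg_adjoin_singleton _ ?_
    exact Polynomial.aeval_mem_adjoin_singleton ℤ ζK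
  have hα'int : IsIntegral ℤ α' := by
    rw [← isIntegral_algebraMap_iff (algebraMap F K).injective]
    exact hαint
  have hMint : IsIntegral ℤ (Algebra.norm ℚ α') := Algebra.isIntegral_norm ℚ hα'int
  obtain ⟨m, hm⟩ := IsIntegrallyClosed.isIntegral_iff.mp hMint
  have hNm : Algebra.norm ℚ α = (m:ℚ)^2 := by
    rw [hnorm2, ← hm]
    norm_num
  have hm0 : m ≠ 0 := by
    intro h
    have h2 : Algebra.norm ℚ α = 0 := by rw [hNm, h]; norm_num
    exact hα0 (by rwa [Algebra.norm_eq_zero_iff] at h2)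
  -- p divides the constant coefficient of the minimal polynomial of α
  set g : Polynomial ℤ := minpoly ℤ α with hgdef
  have hdvd : Polynomial.cyclotomic r ℤ ∣ g.comp P := by
    rw [show Polynomial.cyclotomic r ℤ = Polynomial.cyclotomic (n:ℕ) ℤ from rfl,
      Polynomial.cyclotomic_eq_minpoly hζK n.pos]
    refine minpoly.isIntegrallyClosed_dvd hζint ?_
    rw [Polynomial.aeval_comp, ← hα]
    exact minpoly.aeval ℤ α
  haveI : NeZero ((r:ℕ) : AlgebraicClosure (ZMod p)) := NeZero.of_not_dvd _ hpr
  have hcycζ : Polynomial.aeval ζ (Polynomial.cyclotomic r ℤ) = 0 := by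
    rw [Polynomial.aeval_def, Polynomial.eval₂_eq_eval_map, Polynomial.map_cyclotomic]
    exact Polynomial.isRoot_cyclotomic_iff.mpr hζ
  have hgc : Polynomial.aeval ζ (g.comp P) = 0 := by
    obtain ⟨q, hq⟩ := hdvd
    rw [hq, map_mul, hcycζ, zero_mul]
  have hg0 : algebraMap ℤ (AlgebraicClosure (ZMod p)) (g.coeff 0) = 0 := by
    rw [Polynomial.aeval_comp, h0] at hgc
    rwa [Polynomial.aeval_def, Polynomial.eval₂_at_zero] at hgc
  have hpc0 : (p:ℤ) ∣ g.coeff 0 := by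
    rw [← CharP.intCast_eq_zero_iff (AlgebraicClosure (ZMod p)) p]
    rw [eq_intCast] at hg0
    exact hg0
  -- norm = ± (coeff 0)^k
  have hαintQ : IsIntegral ℚ α := IsIntegral.of_finite ℚ α
  set k : ℕ := Module.finrank ℚ⟮α⟯ K with hkdef
  have hadj : Algebra.norm ℚ α
      = Algebra.norm ℚ (IntermediateField.AdjoinSimple.gen ℚ α) ^ k :=
    Algebra.norm_eq_norm_adjoin ℚ α
  set pb := IntermediateField.adjoin.powerBasis hαintQ with hpb
  have hgen : Algebra.norm ℚ (IntermediateField.AdjoinSimple.gen ℚ α)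
      = (-1)^pb.dim * ((minpoly ℚ (IntermediateField.AdjoinSimple.gen ℚ α)).coeff 0) := by
    have h5 := Algebra.PowerBasis.norm_gen_eq_coeff_zero_minpoly pb
    rwa [IntermediateField.adjoin.powerBasis_gen] at h5
  have hminQ : minpoly ℚ (IntermediateField.AdjoinSimple.gen ℚ α) = minpoly ℚ α :=
    IntermediateField.minpoly_gen ℚ α
  have hmapg : minpoly ℚ α = g.map (algebraMap ℤ ℚ) :=
    minpoly.isIntegrallyClosed_eq_field_fractions ℚ K hαint
  have hNval : Algebra.norm ℚ α = (((-1)^pb.dim * g.coeff 0 : ℤ) : ℚ) ^ k := by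
    rw [hadj, hgen, hminQ, hmapg, Polynomial.coeff_map, algebraMap_int_eq]
    simp only [Int.coe_castRingHom]
    push_cast
    ring
  have hm2int : m ^ 2 = ((-1)^pb.dim * g.coeff 0) ^ k := by
    have h6 : ((m:ℚ))^2 = (((-1)^pb.dim * g.coeff 0 : ℤ) : ℚ) ^ k := by
      rw [← hNm, hNval]
    exact_mod_cast h6
  haveI : FiniteDimensional ℚ⟮α⟯ K := FiniteDimensional.right ℚ ℚ⟮α⟯ K
  have hk1 : k ≠ 0 := by
    have : 0 < k := Module.finrank_pos
    omega
  have hpm : (p:ℤ) ∣ m := by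
    have h7 : (p:ℤ) ∣ m^2 := by
      rw [hm2int]
      exact (hpc0.trans (dvd_mul_left _ _)).trans (dvd_pow_self _ hk1)
    exact Int.Prime.dvd_pow' hp.1 h7
  -- the archimedean bound
  have hprod : algebraMap ℚ ℂ (Algebra.norm ℚ α) = ∏ σ : K →ₐ[ℚ] ℂ, σ α :=
    Algebra.norm_eq_prod_embeddings ℚ ℂ α
  have habsσ : ∀ σ : K →ₐ[ℚ] ℂ, ‖σ α‖ ≤ (D:ℝ) := by
    intro σ
    rw [key σ]
    have hω : IsPrimitiveRoot (σ ζK) r := hζK.map_of_injective σ.toRingHom.injective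
    have hωabs : ‖σ ζK‖ = 1 := by
      have hh : ‖σ ζK‖ ^ r = 1 := by
        rw [← norm_pow, hω.pow_eq_one, norm_one]
      rcases lt_trichotomy ‖σ ζK‖ 1 with h | h | h
      · have := pow_lt_one₀ (norm_nonneg _) h hr0.ne'
        rw [hh] at this; exact absurd this (lt_irrefl _)
      · exact h
      · have := one_lt_pow₀ h hr0.ne'
        rw [hh] at this; exact absurd this (lt_irrefl _)
    have hsum : Polynomial.aeval (σ ζK) P
        = ∑ i ∈ P.support, (P.coeff i : ℂ) * (σ ζK) ^ i := by
      rw [Polynomial.aeval_def, Polynomial.eval₂_eq_sum, Polynomial.sum_def]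
      simp [algebraMap_int_eq]
    rw [hsum]
    calc ‖∑ i ∈ P.support, (P.coeff i : ℂ) * (σ ζK) ^ i‖
        ≤ ∑ i ∈ P.support, ‖(P.coeff i : ℂ) * (σ ζK) ^ i‖ :=
          norm_sum_le _ _
      _ = ∑ i ∈ P.support, |((P.coeff i : ℝ))| := by
          refine Finset.sum_congr rfl fun i _ => ?_
          rw [norm_mul, norm_pow, hωabs, one_pow, mul_one, Complex.norm_intCast]
      _ = (D:ℝ) := by
          rw [hD]
          push_cast [Nat.cast_natAbs]
          rfl
  have hcard : Fintype.card (K →ₐ[ℚ] ℂ) = Nat.totient r := by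
    rw [Fintype.card_congr E, Fintype.card_coe]
    exact Complex.card_primitiveRoots r
  have habsN : |(m:ℝ)| ^ 2 ≤ (D:ℝ) ^ (Nat.totient r) := by
    have h1 : ‖algebraMap ℚ ℂ (Algebra.norm ℚ α)‖ = |(m:ℝ)| ^ 2 := by
      rw [hNm, map_pow, map_intCast (algebraMap ℚ ℂ) m, norm_pow, Complex.norm_intCast]
    have h2 : ‖∏ σ : K →ₐ[ℚ] ℂ, σ α‖ ≤ (D:ℝ) ^ (Nat.totient r) := by
      rw [norm_prod]
      calc (∏ σ : K →ₐ[ℚ] ℂ, ‖σ α‖)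
          ≤ ∏ _σ : K →ₐ[ℚ] ℂ, (D:ℝ) :=
            Finset.prod_le_prod (fun _ _ => norm_nonneg _) (fun σ _ => habsσ σ)
        _ = (D:ℝ) ^ (Nat.totient r) := by
            rw [Finset.prod_const, Finset.card_univ, hcard]
    rw [← h1, hprod]
    exact h2
  -- final contradiction
  have hD0 : (0:ℝ) ≤ (D:ℝ) := Nat.cast_nonneg D
  have hrpow : ((D:ℝ) ^ ((Nat.totient r : ℝ)/2))^2 = (D:ℝ) ^ (Nat.totient r) := by
    rw [← Real.rpow_natCast ((D:ℝ) ^ ((Nat.totient r : ℝ)/2)) 2, ← Real.rpow_mul hD0]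
    have he : ((Nat.totient r : ℝ)/2) * ((2:ℕ):ℝ) = ((Nat.totient r : ℕ):ℝ) := by
      push_cast; ring
    rw [he, Real.rpow_natCast]
  have hmle : |(m:ℝ)| ≤ (D:ℝ) ^ ((Nat.totient r : ℝ)/2) := by
    have h3 : |(m:ℝ)|^2 ≤ ((D:ℝ) ^ ((Nat.totient r : ℝ)/2))^2 := by
      rw [hrpow]; exact habsN
    have h4 := Real.sqrt_le_sqrt h3
    rwa [Real.sqrt_sq (abs_nonneg _), Real.sqrt_sq (Real.rpow_nonneg hD0 _)] at h4
  have hple : (p:ℝ) ≤ |(m:ℝ)| := by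
    have h5 : (p:ℤ) ≤ |m| := Int.le_of_dvd (abs_pos.mpr hm0) ((dvd_abs _ _).mpr hpm)
    calc (p:ℝ) = ((p:ℤ):ℝ) := by push_cast; rfl
      _ ≤ ((|m|:ℤ):ℝ) := by exact_mod_cast h5
      _ = |(m:ℝ)| := by push_cast; rfl
  linarith
end

section
/- Let r > 2 and let P be an integer polynomial such that P(e^{2πi/r}) is a nonzero real number. Then the product N = ∏ P(e^{2πil/r}), taken over all l with 1 ≤ l < r/2 and gcd(l, r) = 1, is a nonzero integer. -/
open Finset

private def hS (r : ℕ) : Finset ℕ :=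
  (Finset.range r).filter (fun l => 1 ≤ l ∧ 2 * l < r ∧ Nat.gcd l r = 1)

private def rho (r : ℕ) [NeZero r] (u : (ZMod r)ˣ) (l : ℕ) : ℕ :=
  if 2 * (((u : ZMod r) * l).val) < r then ((u : ZMod r) * l).val
  else ((-((u : ZMod r) * l)).val)

private lemma two_val_ne (r : ℕ) (hr : 2 < r) [NeZero r] (w : (ZMod r)ˣ) :
    2 * (w : ZMod r).val ≠ r := by
  intro h
  have hcop : Nat.gcd (w : ZMod r).val r = 1 := ZMod.val_coe_unit_coprime w
  have hdvd : (w : ZMod r).val ∣ r := ⟨2, by omega⟩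
  have := Nat.gcd_eq_left hdvd
  omega

private lemma rho_mem (r : ℕ) (hr : 2 < r) [NeZero r] (u : (ZMod r)ˣ) (l : ℕ)
    (hl : l ∈ hS r) : rho r u l ∈ hS r := by
  simp only [hS, mem_filter, mem_range] at hl ⊢
  obtain ⟨hlr, hl1, hl2, hlcop⟩ := hl
  set w : (ZMod r)ˣ := u * ZMod.unitOfCoprime l hlcop with hw
  have hwc : (w : ZMod r) = (u : ZMod r) * l := by
    simp [hw, ZMod.coe_unitOfCoprime]
  have hvlt : ((u : ZMod r) * l).val < r := ZMod.val_lt _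
  haveI : Fact (1 < r) := ⟨by omega⟩
  have hvne : ((u : ZMod r) * l) ≠ 0 := by
    rw [← hwc]; exact w.ne_zero
  have hvpos : 0 < ((u : ZMod r) * l).val := by
    rcases Nat.eq_zero_or_pos ((u : ZMod r) * l).val with h | h
    · exact absurd ((ZMod.val_eq_zero _).mp h) hvne
    · exact h
  have h2ne : 2 * ((u : ZMod r) * l).val ≠ r := by
    have := two_val_ne r hr w; rwa [hwc] at this
  have hcop : (((u : ZMod r) * l).val).Coprime r := by
    have := ZMod.val_coe_unit_coprime w; rwa [hwc] at this
  have hnegcop : ((-((u : ZMod r) * l)).val).Coprime r := by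
    have := ZMod.val_coe_unit_coprime (-w)
    rwa [Units.val_neg, hwc] at this
  have hnegval : (-((u : ZMod r) * l)).val = r - ((u : ZMod r) * l).val := by
    rw [ZMod.neg_val, if_neg hvne]
  unfold rho
  split_ifs with h
  · exact ⟨hvlt, by omega, h, hcop⟩
  · refine ⟨by omega, by omega, by omega, hnegcop⟩

private lemma rho_cast (r : ℕ) [NeZero r] (u : (ZMod r)ˣ) (l : ℕ) :
    ((rho r u l : ℕ) : ZMod r) = (u : ZMod r) * l ∨
    ((rho r u l : ℕ) : ZMod r) = -((u : ZMod r) * l) := by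
  unfold rho
  split_ifs with h
  · left; exact ZMod.natCast_zmod_val _
  · right; rw [ZMod.natCast_zmod_val]

private lemma half_eq (r : ℕ) (hr : 2 < r) {x y : ℕ} (hx1 : 1 ≤ x) (hx2 : 2 * x < r)
    (hy1 : 1 ≤ y) (hy2 : 2 * y < r)
    (h : (x : ZMod r) = (y : ZMod r) ∨ (x : ZMod r) = -(y : ZMod r)) : x = y := by
  rcases h with h | h
  · rw [ZMod.natCast_eq_natCast_iff] at h
    have h2 : x % r = y % r := h
    rw [Nat.mod_eq_of_lt (by omega), Nat.mod_eq_of_lt (by omega)] at h2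
    exact h2
  · exfalso
    have : ((x + y : ℕ) : ZMod r) = 0 := by push_cast [h]; ring
    rw [ZMod.natCast_eq_zero_iff] at this
    rcases this with ⟨k, hk⟩
    rcases k with _ | k
    · omega
    · have : r ≤ r * (k+1) := Nat.le_mul_of_pos_right _ (by omega)
      omega

private lemma prod_half_invariant {M : Type*} [CommMonoid M] (r : ℕ) (hr : 2 < r) [NeZero r]
    (F : ZMod r → M) (hev : ∀ u : (ZMod r)ˣ, F (-(u : ZMod r)) = F u) (c : (ZMod r)ˣ) :
    ∏ l ∈ hS r, F ((c : ZMod r) * l) = ∏ l ∈ hS r, F (l : ZMod r) := by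
  have key : ∀ (u v : (ZMod r)ˣ), (v : ZMod r) * (u : ZMod r) = 1 →
      ∀ l ∈ hS r, rho r v (rho r u l) = l := by
    intro u v huv l hl
    have hm := rho_mem r hr u l hl
    have hmm := rho_mem r hr v _ hm
    simp only [hS, mem_filter, mem_range] at hl hm hmm
    refine half_eq r hr hmm.2.1 hmm.2.2.1 hl.2.1 hl.2.2.1 ?_
    rcases rho_cast r v (rho r u l) with h1 | h1 <;>
      rcases rho_cast r u l with h2 | h2 <;>
      rw [h2] at h1
    · left; rw [h1, ← mul_assoc, huv, one_mul]
    · right; rw [h1, mul_neg, ← mul_assoc, huv, one_mul]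
    · right; rw [h1, ← mul_assoc, huv, one_mul]
    · left; rw [h1, mul_neg, ← mul_assoc, huv, one_mul, neg_neg]
  refine Finset.prod_nbij' (rho r c) (rho r c⁻¹) (fun a ha => rho_mem r hr c a ha)
    (fun a ha => rho_mem r hr c⁻¹ a ha)
    (key c c⁻¹ (by rw [← Units.val_mul, inv_mul_cancel, Units.val_one]))
    (key c⁻¹ c (by rw [← Units.val_mul, mul_inv_cancel, Units.val_one])) ?_
  intro a ha
  simp only [hS, mem_filter, mem_range] at ha
  set w : (ZMod r)ˣ := c * ZMod.unitOfCoprime a ha.2.2.2 with hw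
  have hwc : (w : ZMod r) = (c : ZMod r) * a := by simp [hw, ZMod.coe_unitOfCoprime]
  rcases rho_cast r c a with h | h <;> rw [h]
  rw [← hwc]
  exact (hev w).symm

open Polynomial Complex

private lemma aeval_ringHom_int {R S : Type*} [CommRing R] [CommRing S] (ψ : R →+* S)
    (P : Polynomial ℤ) (x : R) :
    ψ (Polynomial.aeval x P) = Polynomial.aeval (ψ x) P := by
  rw [Polynomial.aeval_def, Polynomial.aeval_def, Polynomial.hom_eval₂]
  congr 1
  exact RingHom.ext_int _ _

/-- Let `r > 2` and let `P` be an integer polynomial such that `P(e^{2πi/r})` is a nonzero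
real number. Then `N = ∏_{1 ≤ l < r/2, gcd(l,r)=1} P(e^{2πil/r})` is a nonzero integer. -/
theorem statement1 (r : ℕ) (hr : 2 < r) (P : Polynomial ℤ)
    (hreal : (Polynomial.aeval (Complex.exp (2 * Real.pi * Complex.I / r)) P).im = 0)
    (hne : Polynomial.aeval (Complex.exp (2 * Real.pi * Complex.I / r)) P ≠ 0) :
    ∃ N : ℤ, N ≠ 0 ∧
      (N : ℂ) = ∏ l ∈ (Finset.range r).filter (fun l => 1 ≤ l ∧ 2 * l < r ∧ Nat.gcd l r = 1),
        Polynomial.aeval (Complex.exp (2 * Real.pi * Complex.I * l / r)) P := by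
  haveI : NeZero r := ⟨by omega⟩
  set n : ℕ+ := ⟨r, by omega⟩ with hn
  haveI : NeZero ((n : ℕ) : ℚ) := ⟨show ((r : ℕ) : ℚ) ≠ 0 from Nat.cast_ne_zero.mpr (by omega)⟩
  set K := CyclotomicField n ℚ with hK
  haveI hcyc : IsCyclotomicExtension {(n : ℕ)} ℚ K := CyclotomicField.isCyclotomicExtension (n : ℕ) ℚ
  haveI : IsGalois ℚ K := IsCyclotomicExtension.isGalois {(n : ℕ)} ℚ K
  haveI : FiniteDimensional ℚ K := IsCyclotomicExtension.finiteDimensional {(n : ℕ)} ℚ K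
  let φ : K →ₐ[ℚ] ℂ := IsAlgClosed.lift
  have hφinj : Function.Injective φ := φ.toRingHom.injective
  set ζc : ℂ := Complex.exp (2 * Real.pi * Complex.I / r) with hζc
  have hζcprim : IsPrimitiveRoot ζc r := Complex.isPrimitiveRoot_exp r (by omega)
  set z0 := IsCyclotomicExtension.zeta (n : ℕ) ℚ K with hz0
  have hz0prim : IsPrimitiveRoot z0 r := IsCyclotomicExtension.zeta_spec (n : ℕ) ℚ K
  have hφz0 : IsPrimitiveRoot (φ z0) r := hz0prim.map_of_injective hφinj
  obtain ⟨i, hir, hi⟩ := hφz0.eq_pow_of_pow_eq_one hζcprim.pow_eq_one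
  set ζ : K := z0 ^ i with hζdef
  have hφζ : φ ζ = ζc := by rw [hζdef, map_pow, hi]
  have hζprim : IsPrimitiveRoot ζ r := by
    have h1 : IsPrimitiveRoot (φ ζ) r := hφζ ▸ hζcprim
    exact h1.of_map_of_injective hφinj
  have hpow : ∀ a : ℕ, ζ ^ a = ζ ^ (a % r) := by
    intro a
    conv_lhs => rw [← Nat.div_add_mod a r]
    rw [pow_add, pow_mul, hζprim.pow_eq_one, one_pow, one_mul]
  have hpoweq : ∀ a b : ℕ, (a : ZMod r) = (b : ZMod r) → ζ ^ a = ζ ^ b := by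
    intro a b hab
    rw [ZMod.natCast_eq_natCast_iff'] at hab
    rw [hpow a, hpow b, hab]
  have hvalpow : ∀ a : ℕ, ζ ^ ((a : ZMod r)).val = ζ ^ a := by
    intro a
    exact hpoweq _ _ (by rw [ZMod.natCast_zmod_val])
  -- step 1 : transfer reality
  have hKsym : Polynomial.aeval (ζ ^ (r - 1)) P = Polynomial.aeval ζ P := by
    apply hφinj
    have e1 : φ (Polynomial.aeval (ζ ^ (r - 1)) P) = Polynomial.aeval (φ (ζ ^ (r - 1))) P :=
      aeval_ringHom_int (φ : K →+* ℂ) P _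
    have e2 : φ (Polynomial.aeval ζ P) = Polynomial.aeval (φ ζ) P :=
      aeval_ringHom_int (φ : K →+* ℂ) P _
    rw [e1, e2, map_pow, hφζ]
    have hinv : ζc ^ (r - 1) = (starRingEnd ℂ) ζc := by
      have h1 : ζc ^ (r - 1) * ζc = 1 := by
        rw [← pow_succ]
        have : r - 1 + 1 = r := by omega
        rw [this, hζcprim.pow_eq_one]
      have h2 : (starRingEnd ℂ) ζc * ζc = 1 := by
        rw [hζc, ← Complex.exp_conj]
        rw [← Complex.exp_add]
        have : (starRingEnd ℂ) (2 * Real.pi * Complex.I / r) = -(2 * Real.pi * Complex.I / r) := by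
          rw [map_div₀, map_mul, map_mul, Complex.conj_I, map_ofNat, Complex.conj_ofReal,
            Complex.conj_natCast]
          ring
        rw [this, neg_add_cancel, Complex.exp_zero]
      have hz : ζc ≠ 0 := by rw [hζc]; exact Complex.exp_ne_zero _
      exact mul_right_cancel₀ hz (h1.trans h2.symm)
    rw [hinv, ← aeval_ringHom_int (starRingEnd ℂ) P ζc]
    exact Complex.conj_eq_iff_im.mpr hreal
  -- automorphisms
  have hirr : Irreducible (Polynomial.cyclotomic n ℚ) := Polynomial.cyclotomic.irreducible_rat n.pos
  have hauto : ∀ m : ℕ, Nat.Coprime m r → ∃ σ : K ≃ₐ[ℚ] K, σ ζ = ζ ^ m := by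
    intro m hm
    have hprim : IsPrimitiveRoot (z0 ^ m) ((n : ℕ)) := hz0prim.pow_of_coprime m hm
    refine ⟨IsCyclotomicExtension.fromZetaAut hprim hirr, ?_⟩
    have hspec := IsCyclotomicExtension.fromZetaAut_spec hprim hirr
    rw [hζdef, map_pow, hspec, ← pow_mul, ← pow_mul, mul_comm]
  have hpowσ : ∀ σ : K ≃ₐ[ℚ] K, ∃ t : ℕ, Nat.Coprime t r ∧ σ ζ = ζ ^ t := by
    intro σ
    have h1 : IsPrimitiveRoot (σ ζ) r := hζprim.map_of_injective σ.injective
    obtain ⟨t, htr, htc, ht⟩ := (hζprim.isPrimitiveRoot_iff).mp h1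
    exact ⟨t, htc, ht.symm⟩
  -- evenness
  set F : ZMod r → K := fun x => Polynomial.aeval (ζ ^ x.val) P with hF
  have hev : ∀ u : (ZMod r)ˣ, F (-(u : ZMod r)) = F u := by
    intro u
    have hcop : Nat.Coprime ((u : ZMod r)).val r := ZMod.val_coe_unit_coprime u
    obtain ⟨σ, hσ⟩ := hauto _ hcop
    have h2 := congrArg σ hKsym
    have e1 : σ (Polynomial.aeval (ζ ^ (r - 1)) P) = Polynomial.aeval (σ (ζ ^ (r - 1))) P :=
      aeval_ringHom_int (σ : K →+* K) P _
    have e2 : σ (Polynomial.aeval ζ P) = Polynomial.aeval (σ ζ) P :=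
      aeval_ringHom_int (σ : K →+* K) P _
    rw [e1, e2, map_pow, hσ, ← pow_mul] at h2
    have e1 : ζ ^ ((-(u : ZMod r)).val) = ζ ^ ((u : ZMod r).val * (r - 1)) := by
      apply hpoweq
      rw [ZMod.natCast_zmod_val, Nat.cast_mul, ZMod.natCast_zmod_val]
      rw [Nat.cast_sub (by omega : 1 ≤ r), ZMod.natCast_self, Nat.cast_one, zero_sub,
        mul_neg_one]
    show Polynomial.aeval (ζ ^ ((-(u : ZMod r)).val)) P = Polynomial.aeval (ζ ^ ((u : ZMod r).val)) P
    rw [e1, h2]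
  -- nonvanishing
  have hζPne : Polynomial.aeval ζ P ≠ 0 := by
    intro h0
    apply hne
    have h1 := congrArg φ h0
    rw [show φ (Polynomial.aeval ζ P) = Polynomial.aeval (φ ζ) P from
      aeval_ringHom_int (φ : K →+* ℂ) P ζ, hφζ] at h1
    simpa using h1
  have hfac : ∀ m : ℕ, Nat.Coprime m r → Polynomial.aeval (ζ ^ m) P ≠ 0 := by
    intro m hm h0
    obtain ⟨σ, hσ⟩ := hauto m hm
    apply hζPne
    apply σ.injective
    rw [map_zero, show σ (Polynomial.aeval ζ P) = Polynomial.aeval (σ ζ) P from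
      aeval_ringHom_int (σ : K →+* K) P ζ, hσ, h0]
  -- the product
  set NK : K := ∏ l ∈ hS r, Polynomial.aeval (ζ ^ l) P with hNK
  have hNKF : NK = ∏ l ∈ hS r, F ((l : ZMod r)) := by
    rw [hNK]
    refine Finset.prod_congr rfl fun l hl => ?_
    show _ = Polynomial.aeval (ζ ^ ((l : ZMod r)).val) P
    rw [hvalpow l]
  have hinvar : ∀ σ : K ≃ₐ[ℚ] K, σ NK = NK := by
    intro σ
    obtain ⟨t, htc, hσζ⟩ := hpowσ σ
    rw [hNK, map_prod]
    set c : (ZMod r)ˣ := ZMod.unitOfCoprime t htc with hc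
    have step : ∀ l ∈ hS r, σ (Polynomial.aeval (ζ ^ l) P) = F ((c : ZMod r) * (l : ZMod r)) := by
      intro l hl
      have e1 : σ (Polynomial.aeval (ζ ^ l) P) = Polynomial.aeval (σ (ζ ^ l)) P :=
        aeval_ringHom_int (σ : K →+* K) P _
      rw [e1, map_pow, hσζ, ← pow_mul]
      show _ = Polynomial.aeval (ζ ^ (((c : ZMod r) * (l : ZMod r)).val)) P
      congr 2
      refine (hpoweq _ _ ?_).symm
      rw [ZMod.natCast_zmod_val, hc, ZMod.coe_unitOfCoprime, Nat.cast_mul]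
    rw [Finset.prod_congr rfl step, prod_half_invariant r hr F hev c, ← hNKF]
  -- rationality
  have hfix : NK ∈ IntermediateField.fixedField (⊤ : Subgroup (K ≃ₐ[ℚ] K)) := fun g => hinvar g
  have hbot : NK ∈ (⊥ : IntermediateField ℚ K) := by
    have hiff := (IsGalois.tfae (F := ℚ) (E := K)).out 0 1
    rw [← hiff.mp (inferInstance : IsGalois ℚ K)]
    exact hfix
  obtain ⟨q, hq⟩ := IntermediateField.mem_bot.mp hbot
  -- integrality
  have hζint : IsIntegral ℤ ζ := by
    refine ⟨Polynomial.X ^ r - Polynomial.C 1, Polynomial.monic_X_pow_sub_C 1 (by omega), ?_⟩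
    simp [hζprim.pow_eq_one]
  have hint : IsIntegral ℤ NK := by
    have hmem : NK ∈ integralClosure ℤ K := by
      rw [hNK]
      refine Subalgebra.prod_mem _ fun l hl => ?_
      have h1 : ζ ^ l ∈ integralClosure ℤ K := Subalgebra.pow_mem _ hζint l
      have h2 : Algebra.adjoin ℤ {ζ ^ l} ≤ integralClosure ℤ K := by
        apply Algebra.adjoin_le
        intro y hy
        rw [Set.mem_singleton_iff] at hy
        rw [hy]
        exact h1
      exact h2 (Polynomial.aeval_mem_adjoin_singleton ℤ _)
    exact hmem
  have hq_int : IsIntegral ℤ q := by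
    rw [← isIntegral_algebraMap_iff (algebraMap ℚ K).injective, hq]
    exact hint
  obtain ⟨z, hz⟩ := IsIntegrallyClosed.isIntegral_iff.mp hq_int
  have hNKne : NK ≠ 0 := by
    rw [hNK]
    refine Finset.prod_ne_zero_iff.mpr fun l hl => ?_
    simp only [hS, Finset.mem_filter] at hl
    exact hfac l hl.2.2.2
  refine ⟨z, ?_, ?_⟩
  · intro h0
    apply hNKne
    rw [← hq, ← hz, h0]
    simp
  · have h1 : φ NK = ∏ l ∈ hS r, Polynomial.aeval (ζc ^ l) P := by
      rw [hNK, map_prod]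
      refine Finset.prod_congr rfl fun l hl => ?_
      rw [show φ (Polynomial.aeval (ζ ^ l) P) = Polynomial.aeval (φ (ζ ^ l)) P from
        aeval_ringHom_int (φ : K →+* ℂ) P _, map_pow, hφζ]
    have h2 : φ NK = (z : ℂ) := by
      rw [← hq, ← hz]
      rw [φ.commutes]
      simp
    rw [← h2, h1]
    refine Finset.prod_congr rfl fun l hl => ?_
    congr 2
    rw [hζc, ← Complex.exp_nat_mul]
    congr 1
    push_cast
    ring
end

section
/- Let d > 2 and let a_0, ..., a_{r-1} be nonnegative integers with ∑ a_m ≤ d, such that ∑_m a_m e^{2πim/r} is a nonzero real number, where 2 < r ≤ d and r is of the form 2d/n for a divisor n ≥ 2 of d. Then for any prime p > d^{φ(d)/2} not dividing r and any primitive r-th root of unity ζ over F_p, one has ∑_m a_m ζ^m ≠ 0 in the algebraic closure of F_p. -/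
lemma aux_totient {d e : ℕ} (he : e ∣ d) (hr : 2 * e ≤ d) (he2 : 2 ≤ e) :
    Nat.totient (2 * e) ≤ Nat.totient d := by
  have hd0 : 0 < d := lt_of_lt_of_le (by omega) hr
  have hφd : 0 < d.totient := Nat.totient_pos.2 hd0
  obtain ⟨k, hk⟩ := he
  have he0 : 0 < e := by omega
  have hk2 : 2 ≤ k := by nlinarith
  rcases Nat.even_or_odd e with heven | hodd
  · have h2e : Nat.totient (2 * e) = 2 * Nat.totient e :=
      Nat.totient_mul_of_prime_of_dvd Nat.prime_two heven.two_dvd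
    rcases Nat.even_or_odd k with hkeven | hkodd
    · obtain ⟨j, hj⟩ := hkeven
      have hdvd : 2 * e ∣ d := ⟨j, by subst hk hj; ring⟩
      exact Nat.le_of_dvd hφd (Nat.totient_dvd_of_dvd hdvd)
    · set q := k.minFac with hqdef
      have hq : q.Prime := Nat.minFac_prime (by omega)
      have hqk : q ∣ k := Nat.minFac_dvd k
      have hq2 : q ≠ 2 := by
        intro h
        rw [h] at hqk
        exact (Nat.not_even_iff_odd.2 hkodd) (even_iff_two_dvd.2 hqk)
      have hq3 : 3 ≤ q := by
        rcases hq.two_le.lt_or_eq with h | h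
        · omega
        · omega
      obtain ⟨j, hj⟩ := hqk
      have hqed : q * e ∣ d := ⟨j, by rw [hk, hj]; ring⟩
      have key : 2 * Nat.totient e ≤ Nat.totient (q * e) := by
        by_cases hqe : q ∣ e
        · rw [Nat.totient_mul_of_prime_of_dvd hq hqe]
          have := Nat.totient_pos.2 he0
          nlinarith
        · rw [Nat.totient_mul ((Nat.Prime.coprime_iff_not_dvd hq).2 hqe)]
          have : 2 ≤ q.totient := by rw [Nat.totient_prime hq]; omega
          have := Nat.totient_pos.2 he0
          nlinarith
      rw [h2e]
      exact key.trans (Nat.le_of_dvd hφd (Nat.totient_dvd_of_dvd hqed))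
  · have hcop : Nat.Coprime 2 e := (Nat.coprime_two_left).2 hodd
    rw [Nat.totient_mul hcop, Nat.totient_two, one_mul]
    exact Nat.le_of_dvd hφd (Nat.totient_dvd_of_dvd ⟨k, hk⟩)


open Polynomial
set_option maxHeartbeats 1000000

lemma aeval_ringHom_int_s17 {A B : Type*} [CommRing A] [CommRing B] (g : A →+* B) (x : A)
    (f : ℤ[X]) : g (aeval x f) = aeval (g x) f := by
  rw [aeval_def, aeval_def, Polynomial.hom_eval₂]
  congr 1
  exact RingHom.ext_int _ _

lemma aeval_hom_int {A B G : Type*} [CommRing A] [CommRing B] [FunLike G A B]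
    [RingHomClass G A B] (g : G) (x : A) (f : ℤ[X]) : g (aeval x f) = aeval (g x) f := by
  have := aeval_ringHom_int_s17 (g : A →+* B) x f
  simpa using this

lemma key (r' : ℕ+) (hr2 : 2 < (r' : ℕ)) (f : Polynomial ℤ)
    (ω : ℂ) (hω : IsPrimitiveRoot ω (r' : ℕ))
    (hrealf : aeval ω⁻¹ f = aeval ω f)
    (hfω : aeval ω f ≠ 0)
    (B : ℝ) (hB : ∀ v : ℕ, ‖aeval (ω ^ v) f‖ ≤ B)
    {p : ℕ} [Fact p.Prime] (hpr : ¬ p ∣ (r' : ℕ))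
    (ζ : AlgebraicClosure (ZMod p)) (hζ : IsPrimitiveRoot ζ (r' : ℕ))
    (hzero : aeval ζ f = 0) :
    (p : ℝ) ≤ B ^ ((r' : ℕ).totient / 2) := by
  have hr0 : 0 < (r' : ℕ) := r'.pos
  haveI hf1 : Fact (1 < (r' : ℕ)) := ⟨by omega⟩
  haveI : NeZero (r' : ℕ) := ⟨r'.ne_zero⟩
  set K := CyclotomicField r' ℚ with hK
  haveI : IsCyclotomicExtension {(r' : ℕ)} ℚ K := CyclotomicField.isCyclotomicExtension _ _
  set η := IsCyclotomicExtension.zeta r' ℚ K with hηdef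
  have hη : IsPrimitiveRoot η (r' : ℕ) := IsCyclotomicExtension.zeta_spec r' ℚ K
  have hirr : Irreducible (cyclotomic (r' : ℕ) ℚ) := cyclotomic.irreducible_rat hr0
  -- embedding into ℂ with η ↦ ω
  have hωmem : ω ∈ primitiveRoots (r' : ℕ) ℂ := (mem_primitiveRoots hr0).2 hω
  set φC : K →ₐ[ℚ] ℂ := (hη.embeddingsEquivPrimitiveRoots ℂ hirr).symm ⟨ω, hωmem⟩ with hφCdef
  have hφC : φC η = ω := by
    have := (hη.embeddingsEquivPrimitiveRoots ℂ hirr).apply_symm_apply ⟨ω, hωmem⟩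
    have := congrArg Subtype.val this
    rwa [hη.embeddingsEquivPrimitiveRoots_apply_coe] at this
  -- the function F
  set F : ZMod (r' : ℕ) → K := fun z => aeval (η ^ z.val) f with hFdef
  have Fcast : ∀ v : ℕ, aeval (η ^ v) f = F (v : ZMod (r' : ℕ)) := by
    intro v
    have : η ^ v = η ^ ((v : ZMod (r' : ℕ))).val := by
      conv_lhs => rw [← Nat.div_add_mod v (r' : ℕ), pow_add, pow_mul, hη.pow_eq_one, one_pow,
        one_mul]
      rw [ZMod.val_natCast]
    rw [this]
  -- realness transported to K
  have hKreal : aeval η⁻¹ f = aeval η f := by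
    apply φC.toRingHom.injective
    erw [aeval_ringHom_int_s17, aeval_ringHom_int_s17]
    simp only [AlgHom.toRingHom_eq_coe, RingHom.coe_coe, map_inv₀, hφC]
    exact hrealf
  -- Galois action on F
  have hact : ∀ (σ : K ≃ₐ[ℚ] K) (z : ZMod (r' : ℕ)),
      σ (F z) = F ((hη.autToPow ℚ σ : ZMod (r' : ℕ)) * z) := by
    intro σ z
    have hspec := hη.autToPow_spec ℚ σ
    calc σ (F z) = aeval (σ (η ^ z.val)) f := aeval_hom_int σ _ f
    _ = aeval ((η ^ ((hη.autToPow ℚ σ : ZMod (r' : ℕ))).val) ^ z.val) f := by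
        rw [map_pow, hspec]
    _ = aeval (η ^ (((hη.autToPow ℚ σ : ZMod (r' : ℕ))).val * z.val)) f := by rw [pow_mul]
    _ = F ((((hη.autToPow ℚ σ : ZMod (r' : ℕ))).val * z.val : ℕ) : ZMod (r' : ℕ)) := Fcast _
    _ = F ((hη.autToPow ℚ σ : ZMod (r' : ℕ)) * z) := by
        rw [Nat.cast_mul, ZMod.natCast_val, ZMod.natCast_val, ZMod.cast_id, ZMod.cast_id]
  have hvalcast : ∀ z : ZMod (r' : ℕ), ((z.val : ℕ) : ZMod (r' : ℕ)) = z := by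
    intro z
    rw [ZMod.natCast_val, ZMod.cast_id]
  have hFneg : ∀ t : (ZMod (r' : ℕ))ˣ,
      F (-(t : ZMod (r' : ℕ))) = F (t : ZMod (r' : ℕ)) := by
    intro t
    have hvcop : Nat.Coprime ((t : ZMod (r' : ℕ))).val (r' : ℕ) :=
      ZMod.val_coe_unit_coprime t
    have hvne : (t : ZMod (r' : ℕ)) ≠ 0 := by
      intro h
      rw [h, ZMod.val_zero, Nat.coprime_zero_left] at hvcop
      omega
    have hvlt : ((t : ZMod (r' : ℕ))).val < (r' : ℕ) := ZMod.val_lt _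
    have hvne0 : ((t : ZMod (r' : ℕ))).val ≠ 0 := fun h => hvne (ZMod.val_eq_zero _ |>.1 h)
    have hnegval : ((-(t : ZMod (r' : ℕ))).val) = (r' : ℕ) - ((t : ZMod (r' : ℕ))).val := by
      rw [ZMod.neg_val]
      simp [hvne]
    have hinv : η ^ ((-(t : ZMod (r' : ℕ))).val) = (η ^ ((t : ZMod (r' : ℕ))).val)⁻¹ := by
      apply eq_inv_of_mul_eq_one_left
      rw [← pow_add, hnegval]
      have h9 : (r' : ℕ) - ((t : ZMod (r' : ℕ))).val + ((t : ZMod (r' : ℕ))).val = (r' : ℕ) := by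
        omega
      rw [h9, hη.pow_eq_one]
    set σt := (IsCyclotomicExtension.autEquivPow K hirr).symm t with hσtdef
    have ht : (hη.autToPow ℚ σt) = t :=
      (IsCyclotomicExtension.autEquivPow K hirr).apply_symm_apply t
    have hσt : σt η = η ^ ((t : ZMod (r' : ℕ))).val := by
      rw [← hη.autToPow_spec ℚ σt, ht]
    have h1 : σt (aeval η⁻¹ f) = σt (aeval η f) := by rw [hKreal]
    have e1 : σt (aeval η⁻¹ f) = aeval (σt η⁻¹) f := aeval_hom_int σt _ f
    have e2 : σt (aeval η f) = aeval (σt η) f := aeval_hom_int σt _ f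
    rw [e1, e2] at h1
    have h2 : (σt η⁻¹ : K) = (η ^ ((t : ZMod (r' : ℕ))).val)⁻¹ := by
      rw [map_inv₀, hσt]
    rw [h2, hσt] at h1
    show aeval (η ^ ((-(t : ZMod (r' : ℕ))).val)) f = aeval (η ^ ((t : ZMod (r' : ℕ))).val) f
    rw [hinv]
    exact h1
  classical
  -- basic facts about units
  have hufacts : ∀ t : (ZMod (r' : ℕ))ˣ, 0 < ((t : ZMod (r' : ℕ))).val ∧
      ((t : ZMod (r' : ℕ))).val < (r' : ℕ) ∧ 2 * ((t : ZMod (r' : ℕ))).val ≠ (r' : ℕ) := by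
    intro t
    have hvcop : Nat.Coprime ((t : ZMod (r' : ℕ))).val (r' : ℕ) :=
      ZMod.val_coe_unit_coprime t
    refine ⟨?_, ZMod.val_lt _, ?_⟩
    · rcases Nat.eq_zero_or_pos ((t : ZMod (r' : ℕ))).val with h | h
      · rw [h, Nat.coprime_zero_left] at hvcop; omega
      · exact h
    · intro h
      have hdvd : ((t : ZMod (r' : ℕ))).val ∣ (r' : ℕ) := ⟨2, by omega⟩
      have h5 := Nat.dvd_gcd dvd_rfl hdvd
      rw [Nat.Coprime] at hvcop
      rw [hvcop] at h5
      have h6 := Nat.le_of_dvd one_pos h5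
      omega
  set P : (ZMod (r' : ℕ))ˣ → Prop := fun t => ((t : ZMod (r' : ℕ))).val ≤ (r' : ℕ) / 2
    with hPdef
  have hxor : ∀ t : (ZMod (r' : ℕ))ˣ, (P t ↔ ¬ P (-t)) := by
    intro t
    obtain ⟨h1, h2, h3⟩ := hufacts t
    have hneg : ((-t : (ZMod (r' : ℕ))ˣ) : ZMod (r' : ℕ)) = -(t : ZMod (r' : ℕ)) :=
      Units.val_neg t
    have hvne : (t : ZMod (r' : ℕ)) ≠ 0 := by
      intro h
      rw [h, ZMod.val_zero] at h1
      omega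
    have hnegval : ((-t : (ZMod (r' : ℕ))ˣ) : ZMod (r' : ℕ)).val
        = (r' : ℕ) - ((t : ZMod (r' : ℕ))).val := by
      rw [hneg, ZMod.neg_val]
      simp [hvne]
    simp only [hPdef, hnegval]
    omega
  set sel : (ZMod (r' : ℕ))ˣ → (ZMod (r' : ℕ))ˣ := fun z => if P z then z else -z with hseldef
  have hselP : ∀ z, P (sel z) := by
    intro z
    by_cases h : P z
    · simpa [hseldef, h] using h
    · have : P (-z) := by
        have := hxor (-z)
        rw [neg_neg] at this
        tauto
      simpa [hseldef, h] using this
  have hselpm : ∀ z, sel z = z ∨ sel z = -z := by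
    intro z
    by_cases h : P z <;> simp [hseldef, h]
  have hselid : ∀ z, P z → sel z = z := by intro z h; simp [hseldef, h]
  have hselneg : ∀ z, sel (-z) = sel z := by
    intro z
    by_cases h : P z
    · have h2 : ¬ P (-z) := (hxor z).1 h
      simp [hseldef, h, h2]
    · have h2 : P (-z) := by
        have := hxor (-z)
        rw [neg_neg] at this
        tauto
      simp [hseldef, h, h2]
  have hselF : ∀ z, F ((sel z : (ZMod (r' : ℕ))ˣ) : ZMod (r' : ℕ))
      = F ((z : (ZMod (r' : ℕ))ˣ) : ZMod (r' : ℕ)) := by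
    intro z
    rcases hselpm z with h | h
    · rw [h]
    · rw [h, Units.val_neg, hFneg]
  set T : Finset (ZMod (r' : ℕ))ˣ := Finset.univ.filter (fun t => P t) with hTdef
  set M : K := ∏ t ∈ T, F ((t : (ZMod (r' : ℕ))ˣ) : ZMod (r' : ℕ)) with hMdef
  -- M is Galois-fixed
  have hσM : ∀ σ : K ≃ₐ[ℚ] K, σ M = M := by
    intro σ
    set u := hη.autToPow ℚ σ with hudef
    have h1 : σ M = ∏ t ∈ T, F (((u * t : (ZMod (r' : ℕ))ˣ)) : ZMod (r' : ℕ)) := by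
      rw [hMdef, map_prod]
      refine Finset.prod_congr rfl fun t ht => ?_
      rw [hact σ t, Units.val_mul]
    rw [h1]
    refine Finset.prod_bij' (fun t _ => sel (u * t)) (fun t _ => sel (u⁻¹ * t)) ?_ ?_ ?_ ?_ ?_
    · intro t ht
      simp only [hTdef, Finset.mem_filter, Finset.mem_univ, true_and]
      exact hselP _
    · intro t ht
      simp only [hTdef, Finset.mem_filter, Finset.mem_univ, true_and]
      exact hselP _
    · intro t ht
      have hPt : P t := by
        simp only [hTdef, Finset.mem_filter, Finset.mem_univ, true_and] at ht
        exact ht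
      show sel (u⁻¹ * sel (u * t)) = t
      rcases hselpm (u * t) with h | h
      · rw [h, inv_mul_cancel_left, hselid _ hPt]
      · rw [h, mul_neg, hselneg, inv_mul_cancel_left, hselid _ hPt]
    · intro t ht
      have hPt : P t := by
        simp only [hTdef, Finset.mem_filter, Finset.mem_univ, true_and] at ht
        exact ht
      show sel (u * sel (u⁻¹ * t)) = t
      rcases hselpm (u⁻¹ * t) with h | h
      · rw [h, mul_inv_cancel_left, hselid _ hPt]
      · rw [h, mul_neg, hselneg, mul_inv_cancel_left, hselid _ hPt]
    · intro t ht
      exact (hselF (u * t)).symm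
  -- M is rational
  haveI hfd : FiniteDimensional ℚ K := IsCyclotomicExtension.finiteDimensional {(r' : ℕ)} ℚ K
  haveI hgal : IsGalois ℚ K := IsCyclotomicExtension.isGalois {(r' : ℕ)} ℚ K
  have htop : IntermediateField.fixedField (⊤ : Subgroup (K ≃ₐ[ℚ] K)) = ⊥ :=
    ((IsGalois.tfae (F := ℚ) (E := K)).out 0 1).mp hgal
  have hMfix : M ∈ IntermediateField.fixedField (⊤ : Subgroup (K ≃ₐ[ℚ] K)) := by
    intro g
    exact hσM g
  rw [htop, IntermediateField.mem_bot] at hMfix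
  obtain ⟨q, hq⟩ := hMfix
  -- M is an algebraic integer
  have hηint : IsIntegral ℤ η := hη.isIntegral hr0
  have hFint : ∀ z : ZMod (r' : ℕ), F z ∈ integralClosure ℤ K := by
    intro z
    have h1 : F z ∈ Algebra.adjoin ℤ ({η ^ z.val} : Set K) :=
      Polynomial.aeval_mem_adjoin_singleton ℤ _
    have h2 : Algebra.adjoin ℤ ({η ^ z.val} : Set K) ≤ integralClosure ℤ K := by
      apply Algebra.adjoin_le
      rintro x hx
      rw [Set.mem_singleton_iff] at hx
      rw [hx]
      exact hηint.pow _
    exact h2 h1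
  have hMint : IsIntegral ℤ M :=
    (Subalgebra.prod_mem (integralClosure ℤ K) (fun t _ => hFint _) : M ∈ integralClosure ℤ K)
  have hqint : IsIntegral ℤ q := by
    rw [← hq] at hMint
    exact (isIntegral_algebraMap_iff (algebraMap ℚ K).injective).mp hMint
  obtain ⟨z, hz⟩ := IsIntegrallyClosed.isIntegral_iff.mp hqint
  have hzq : ((z : ℤ) : ℚ) = q := by simpa using hz
  have hzM : algebraMap ℚ K ((z : ℤ) : ℚ) = M := by rw [hzq, hq]
  -- divisibility: p ∣ z
  set Pl : ℤ[X] := ∏ t ∈ T, f.comp (X ^ ((t : ZMod (r' : ℕ))).val) with hPldef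
  have hPlη : aeval η Pl = M := by
    rw [hPldef, hMdef, map_prod]
    refine Finset.prod_congr rfl fun t ht => ?_
    rw [aeval_comp]
    simp only [map_pow, aeval_X]
    rfl
  have hdvd : cyclotomic (r' : ℕ) ℤ ∣ (Pl - C z) := by
    rw [← map_dvd_map (algebraMap ℤ ℚ) (fun a b h => by exact_mod_cast h)
      (cyclotomic.monic _ ℤ), map_cyclotomic]
    have hmin : cyclotomic (r' : ℕ) ℚ = minpoly ℚ η := cyclotomic_eq_minpoly_rat hη hr0
    rw [hmin]
    apply minpoly.dvd ℚ η
    rw [aeval_map_algebraMap, map_sub, hPlη, aeval_C, ← hzM,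
      IsScalarTower.algebraMap_apply ℤ ℚ K]
    simp
  obtain ⟨g, hg⟩ := hdvd
  haveI hNZ : NeZero ((r' : ℕ) : (AlgebraicClosure (ZMod p))) := by
    constructor
    have h1 : ((r' : ℕ) : ZMod p) ≠ 0 := by
      rw [Ne, ZMod.natCast_eq_zero_iff]
      exact hpr
    intro h2
    apply h1
    apply (algebraMap (ZMod p) (AlgebraicClosure (ZMod p))).injective
    rw [map_natCast]
    simpa using h2
  have hζcyc : aeval ζ (cyclotomic (r' : ℕ) ℤ) = 0 := by
    have h3 := (Polynomial.isRoot_cyclotomic_iff (R := (AlgebraicClosure (ZMod p)))).2 hζ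
    rw [aeval_def, eval₂_eq_eval_map, map_cyclotomic]
    exact h3
  have h1T : (1 : (ZMod (r' : ℕ))ˣ) ∈ T := by
    simp only [hTdef, Finset.mem_filter, Finset.mem_univ, true_and, hPdef]
    rw [Units.val_one, ZMod.val_one]
    omega
  have hPlζ : aeval ζ Pl = 0 := by
    rw [hPldef, map_prod]
    apply Finset.prod_eq_zero h1T
    rw [aeval_comp]
    simp only [map_pow, aeval_X, Units.val_one]
    rw [ZMod.val_one, pow_one]
    exact hzero
  have hzzero : ((z : ℤ) : (AlgebraicClosure (ZMod p))) = 0 := by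
    have h4 := congrArg (aeval ζ) hg
    rw [map_sub, aeval_C, map_mul, hζcyc, zero_mul, hPlζ] at h4
    simpa using h4
  have hpz : (p : ℤ) ∣ z := by
    have h5 : ((z : ZMod p)) = 0 := by
      apply (algebraMap (ZMod p) (AlgebraicClosure (ZMod p))).injective
      rw [map_intCast]
      simpa using hzzero
    exact (ZMod.intCast_zmod_eq_zero_iff_dvd z p).mp h5
  -- z is nonzero
  have hzne : z ≠ 0 := by
    intro h0
    rw [h0] at hzM
    simp only [Int.cast_zero, map_zero] at hzM
    obtain ⟨t, ht, hFt⟩ := Finset.prod_eq_zero_iff.mp hzM.symm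
    have hprim : IsPrimitiveRoot (η ^ ((t : ZMod (r' : ℕ))).val) (r' : ℕ) :=
      hη.pow_of_coprime _ (ZMod.val_coe_unit_coprime t)
    have hmin : minpoly ℚ (η ^ ((t : ZMod (r' : ℕ))).val) = cyclotomic (r' : ℕ) ℚ :=
      (cyclotomic_eq_minpoly_rat hprim hr0).symm
    have hfQ : aeval (η ^ ((t : ZMod (r' : ℕ))).val) (f.map (algebraMap ℤ ℚ)) = 0 := by
      rw [aeval_map_algebraMap]
      exact hFt
    have hdv : cyclotomic (r' : ℕ) ℚ ∣ f.map (algebraMap ℤ ℚ) := by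
      rw [← hmin]
      exact minpoly.dvd ℚ _ hfQ
    obtain ⟨g2, hg2⟩ := hdv
    haveI : NeZero ((r' : ℕ) : ℂ) := ⟨by exact_mod_cast hr0.ne'⟩
    have hωcyc : aeval ω (cyclotomic (r' : ℕ) ℚ) = 0 := by
      rw [aeval_def, eval₂_eq_eval_map, map_cyclotomic]
      exact (Polynomial.isRoot_cyclotomic_iff).2 hω
    have h6 : aeval ω (f.map (algebraMap ℤ ℚ)) = 0 := by
      rw [hg2, map_mul, hωcyc, zero_mul]
    rw [aeval_map_algebraMap] at h6
    exact hfω h6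
  -- cardinality of T
  have hcard : T.card = ((r' : ℕ)).totient / 2 := by
    have hbij : T.card = (Finset.univ.filter (fun t => ¬ P t)).card := by
      refine Finset.card_bij' (fun t _ => -t) (fun t _ => -t) ?hi ?hj ?li ?ri
      case hi =>
        intro t ht
        simp only [hTdef, Finset.mem_filter, Finset.mem_univ, true_and] at ht ⊢
        exact (hxor t).1 ht
      case hj =>
        intro t ht
        simp only [Finset.mem_filter, Finset.mem_univ, true_and] at ht
        simp only [hTdef, Finset.mem_filter, Finset.mem_univ, true_and]
        have := hxor (-t)
        rw [neg_neg] at this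
        tauto
      case li =>
        intro t ht
        simp
      case ri =>
        intro t ht
        simp
    have hsum := Finset.card_filter_add_card_filter_not
      (s := (Finset.univ : Finset (ZMod (r' : ℕ))ˣ)) (p := P)
    rw [← hTdef] at hsum
    rw [Finset.card_univ, ZMod.card_units_eq_totient] at hsum
    omega
  -- the bound
  have hB0 : 0 ≤ B := le_trans (norm_nonneg _) (hB 0)
  have hφM : φC M = (z : ℂ) := by
    rw [← hzM, AlgHom.commutes]
    simp
  have habs : ‖φC M‖ ≤ B ^ T.card := by
    rw [hMdef, map_prod]
    calc ‖∏ t ∈ T, φC (F ((t : (ZMod (r' : ℕ))ˣ) : ZMod (r' : ℕ)))‖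
        = ∏ t ∈ T, ‖φC (F ((t : (ZMod (r' : ℕ))ˣ) : ZMod (r' : ℕ)))‖ :=
          norm_prod _ _
    _ ≤ ∏ _t ∈ T, B := by
        apply Finset.prod_le_prod (fun t _ => norm_nonneg _)
        intro t ht
        have h7 : φC (F ((t : (ZMod (r' : ℕ))ˣ) : ZMod (r' : ℕ)))
            = aeval (ω ^ ((t : ZMod (r' : ℕ))).val) f := by
          rw [hFdef]
          simp only []
          erw [aeval_hom_int φC, map_pow, hφC]
        rw [h7]
        exact hB _
    _ = B ^ T.card := by rw [Finset.prod_const]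
  rw [hφM] at habs
  have habs2 : (|z| : ℝ) ≤ B ^ T.card := by
    rwa [Complex.norm_intCast] at habs
  have hple : (p : ℤ) ≤ |z| := Int.le_of_dvd (abs_pos.mpr hzne) ((dvd_abs _ _).mpr hpz)
  have hple2 : (p : ℝ) ≤ (|z| : ℝ) := by exact_mod_cast hple
  calc (p : ℝ) ≤ (|z| : ℝ) := hple2
  _ ≤ B ^ T.card := habs2
  _ = B ^ ((r' : ℕ).totient / 2) := by rw [hcard]

lemma aeval_mypoly {A : Type*} [CommRing A] (r : ℕ) (a : Fin r → ℕ) (x : A) :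
    aeval x (∑ m : Fin r, C ((a m : ℤ)) * X ^ (m : ℕ)) = ∑ m : Fin r, (a m : A) * x ^ (m : ℕ) := by
  rw [map_sum]
  refine Finset.sum_congr rfl fun m _ => ?_
  rw [map_mul, aeval_C, map_pow, aeval_X]
  push_cast
  ring

open Complex

/-- Let `d > 2`, `2 < r ≤ d` with `r = 2d/n` for a divisor `n ≥ 2` of `d`, and let
`a_0, …, a_{r-1}` be nonnegative integers with `∑ a_m ≤ d` such that
`∑_m a_m e^{2πim/r}` is a nonzero real number.  Then for any prime `p > d^{φ(d)/2}` not
dividing `r` and any primitive `r`-th root of unity `ζ` over `F_p`,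
`∑_m a_m ζ^m ≠ 0` in the algebraic closure of `F_p`. -/
theorem statement17 (d n r : ℕ) (hd : 2 < d) (hn : 2 ≤ n) (hnd : n ∣ d)
    (hrdef : r = 2 * d / n) (hr2 : 2 < r) (hrd : r ≤ d)
    (a : Fin r → ℕ) (ha : ∑ m, a m ≤ d)
    (hreal : (∑ m : Fin r, (a m : ℂ) *
        Complex.exp (2 * Real.pi * Complex.I * (m : ℕ) / r)).im = 0)
    (hne : (∑ m : Fin r, (a m : ℂ) *
        Complex.exp (2 * Real.pi * Complex.I * (m : ℕ) / r)) ≠ 0)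
    (p : ℕ) [Fact p.Prime] (hp : (d : ℝ) ^ ((Nat.totient d : ℝ) / 2) < (p : ℝ))
    (hpr : ¬ p ∣ r)
    (ζ : AlgebraicClosure (ZMod p)) (hζ : IsPrimitiveRoot ζ r) :
    (∑ m : Fin r, (a m : AlgebraicClosure (ZMod p)) * ζ ^ (m : ℕ)) ≠ 0 := by
  intro hzero
  have hr0 : 0 < r := by omega
  set ω : ℂ := Complex.exp (2 * Real.pi * Complex.I / r) with hωdef
  have hωprim : IsPrimitiveRoot ω r := Complex.isPrimitiveRoot_exp r (by omega)
  have hpow : ∀ m : Fin r, ω ^ (m : ℕ) = Complex.exp (2 * Real.pi * Complex.I * (m : ℕ) / r) := by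
    intro m
    rw [hωdef, ← Complex.exp_nat_mul]
    congr 1
    ring
  set f : Polynomial ℤ := ∑ m : Fin r, C ((a m : ℤ)) * X ^ (m : ℕ) with hfdef
  have hfω : aeval ω f = ∑ m : Fin r, (a m : ℂ) *
      Complex.exp (2 * Real.pi * Complex.I * (m : ℕ) / r) := by
    rw [hfdef, aeval_mypoly]
    exact Finset.sum_congr rfl fun m _ => by rw [hpow]
  have hfζ : aeval ζ f = 0 := by
    rw [hfdef]
    exact (aeval_mypoly r a ζ).trans hzero
  have hne' : aeval ω f ≠ 0 := by rw [hfω]; exact hne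
  have hrealf : aeval ω⁻¹ f = aeval ω f := by
    have hconj : (starRingEnd ℂ) (aeval ω f) = aeval ω f := by
      rw [hfω]
      exact Complex.conj_eq_iff_im.2 hreal
    rw [← hconj, aeval_hom_int (starRingEnd ℂ) ω f]
    congr 1
    rw [hωdef, ← Complex.exp_conj, ← Complex.exp_neg]
    congr 1
    simp only [map_div₀, map_mul, Complex.conj_I, map_ofNat, Complex.conj_ofReal, map_natCast]
    ring
  have habsω : ‖ω‖ = 1 := by
    have h8 : (2 * (Real.pi : ℂ) * Complex.I / r) = ((2 * Real.pi / r : ℝ) : ℂ) * Complex.I := by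
      push_cast
      ring
    rw [hωdef, h8, Complex.norm_exp_ofReal_mul_I]
  have hB : ∀ v : ℕ, ‖aeval (ω ^ v) f‖ ≤ ((∑ m, a m : ℕ) : ℝ) := by
    intro v
    rw [hfdef, aeval_mypoly]
    calc ‖∑ m : Fin r, (a m : ℂ) * (ω ^ v) ^ (m : ℕ)‖
        ≤ ∑ m : Fin r, ‖(a m : ℂ) * (ω ^ v) ^ (m : ℕ)‖ :=
          norm_sum_le _ _
    _ = ∑ m : Fin r, (a m : ℝ) := by
        refine Finset.sum_congr rfl fun m _ => ?_
        rw [norm_mul, norm_pow, norm_pow, habsω, one_pow, one_pow, mul_one, Complex.norm_natCast]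
    _ = ((∑ m, a m : ℕ) : ℝ) := by push_cast; rfl
  set r' : ℕ+ := ⟨r, hr0⟩ with hr'def
  have hkey := key r' hr2 f ω hωprim hrealf hne' _ hB hpr ζ hζ hfζ
  -- totient inequality
  have he : d / n ∣ d := Nat.div_dvd_of_dvd hnd
  have hrd2 : r = 2 * (d / n) := by rw [hrdef, Nat.mul_div_assoc 2 hnd]
  have he2 : 2 ≤ d / n := by omega
  have hφrd : Nat.totient r ≤ Nat.totient d := by
    have := aux_totient he (by omega : 2 * (d / n) ≤ d) he2
    rwa [← hrd2] at this
  -- final contradiction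
  have hB0 : (0 : ℝ) ≤ ((∑ m, a m : ℕ) : ℝ) := Nat.cast_nonneg _
  have hend : ((∑ m, a m : ℕ) : ℝ) ^ (r.totient / 2) ≤ (d : ℝ) ^ ((d.totient : ℝ) / 2) := by
    have step1 : ((∑ m, a m : ℕ) : ℝ) ^ (r.totient / 2) ≤ (d : ℝ) ^ (r.totient / 2) :=
      pow_le_pow_left₀ hB0 (by exact_mod_cast ha) _
    have step2 : (d : ℝ) ^ (r.totient / 2) ≤ (d : ℝ) ^ (d.totient / 2) :=
      pow_le_pow_right₀ (by exact_mod_cast (by omega : 1 ≤ d)) (Nat.div_le_div_right hφrd)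
    have step3 : (d : ℝ) ^ (d.totient / 2) = (d : ℝ) ^ ((d.totient : ℝ) / 2) := by
      obtain ⟨c, hc⟩ := Nat.totient_even hd
      have h9 : d.totient / 2 = c := by omega
      have h10 : ((d.totient : ℝ)) / 2 = (c : ℝ) := by
        have : (d.totient : ℝ) = 2 * c := by exact_mod_cast (by omega : d.totient = 2 * c)
        rw [this]; ring
      rw [h9, h10, Real.rpow_natCast]
    calc ((∑ m, a m : ℕ) : ℝ) ^ (r.totient / 2) ≤ (d : ℝ) ^ (r.totient / 2) := step1
    _ ≤ (d : ℝ) ^ (d.totient / 2) := step2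
    _ = (d : ℝ) ^ ((d.totient : ℝ) / 2) := step3
  have : (p : ℝ) ≤ (d : ℝ) ^ ((d.totient : ℝ) / 2) := le_trans hkey hend
  linarith
end

section
/- Let O be a commutative ring, p ∈ O, and let E be the set of pairs (m', Δ') of O-module maps lifting fixed maps modulo p^n on a free O-module. Then the additive group Hom(A⊗A, A) ⊕ Hom(A, A⊗A) (maps over the residue ring) acts freely and transitively on E via (μ, δ) ∘ (m', Δ') = (m' + p^n μ', Δ' + p^n δ'), where μ', δ' are arbitrary lifts of μ, δ. -/
open TensorProduct

private lemma mem_span_smul_top_iff {R : Type*} [CommRing R] (r : R) {M : Type*}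
    [AddCommGroup M] [Module R M] (x : M) :
    x ∈ Ideal.span {r} • (⊤ : Submodule R M) ↔ ∃ m, x = r • m := by
  constructor
  · intro h
    refine Submodule.smul_induction_on h (fun a ha m _ => ?_) ?_
    · obtain ⟨c, rfl⟩ := Ideal.mem_span_singleton'.mp ha
      exact ⟨c • m, by rw [mul_smul, smul_comm]⟩
    · rintro x y ⟨m, rfl⟩ ⟨m', rfl⟩
      exact ⟨m + m', (smul_add _ _ _).symm⟩
  · rintro ⟨m, rfl⟩
    exact Submodule.smul_mem_smul (Ideal.mem_span_singleton_self r) trivial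

/-- If every value of `f` is divisible by `r` and the domain is free, then `f = r • g`. -/
private lemma exists_smul_eq' {R : Type*} [CommRing R] (r : R) {N M : Type*}
    [AddCommGroup N] [Module R N] [Module.Free R N] [AddCommGroup M] [Module R M]
    (f : N →ₗ[R] M) (hf : LinearMap.range f ≤ Ideal.span {r} • (⊤ : Submodule R M)) :
    ∃ g : N →ₗ[R] M, f = r • g := by
  classical
  let b := Module.Free.chooseBasis R N
  have h : ∀ i, ∃ m, f (b i) = r • m := fun i =>
    (mem_span_smul_top_iff r _).mp (hf ⟨b i, rfl⟩)
  choose m hm using h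
  refine ⟨b.constr R m, b.ext fun i => ?_⟩
  simp [hm, Module.Basis.constr_basis]

private lemma mem_p_smul_of_ann {R : Type*} [CommRing R] (p : R) (n : ℕ)
    (hann : ∀ x : R, p ^ n * x = 0 → ∃ y, x = p * y) {M : Type*}
    [AddCommGroup M] [Module R M] [Module.Free R M] (m : M) (h : p ^ n • m = 0) :
    m ∈ Ideal.span {p} • (⊤ : Submodule R M) := by
  classical
  let b := Module.Free.chooseBasis R M
  have hrepr : ∀ i, p ^ n * b.repr m i = 0 := by
    intro i
    have : b.repr (p ^ n • m) i = 0 := by rw [h]; simp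
    simpa using this
  choose y hy using fun i => hann _ (hrepr i)
  rw [← b.linearCombination_repr m, Finsupp.linearCombination_apply]
  apply Submodule.sum_mem
  intro i _
  show (b.repr m) i • b i ∈ _
  rw [hy i, mul_smul]
  exact Submodule.smul_mem_smul (Ideal.mem_span_singleton_self p) trivial

private lemma free_iff {R : Type*} [CommRing R] (p : R) (n : ℕ)
    (hpn : p ^ (n + 1) = 0) (hann : ∀ x : R, p ^ n * x = 0 → ∃ y, x = p * y)
    {N M : Type*} [AddCommGroup N] [Module R N]
    [AddCommGroup M] [Module R M] [Module.Free R M]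
    (μ μ' : N →ₗ[R] M) :
    p ^ n • μ = p ^ n • μ' ↔
      LinearMap.range (μ - μ') ≤ Ideal.span {p} • (⊤ : Submodule R M) := by
  constructor
  · intro h
    rintro x ⟨z, rfl⟩
    refine mem_p_smul_of_ann p n hann _ ?_
    have := LinearMap.congr_fun h z
    simp only [LinearMap.smul_apply] at this
    simp [LinearMap.sub_apply, smul_sub, this]
  · intro h
    ext z
    obtain ⟨m, hm⟩ := (mem_span_smul_top_iff p _).mp (h ⟨z, rfl⟩)
    simp only [LinearMap.sub_apply] at hm
    have : μ z - μ' z = p • m := hm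
    have h2 : p ^ n • (μ z - μ' z) = 0 := by
      rw [this, smul_smul, ← pow_succ, hpn, zero_smul]
    simp only [LinearMap.smul_apply]
    rw [smul_sub, sub_eq_zero] at h2
    exact h2


/-- (The torsor of extensions in the lifting theorem.)  Let `R` (playing `O/p^{n+1}`) be a
commutative ring with `p^{n+1} = 0` and `ann(p^n) = (p)`, and let `M` (playing `A_{n+1}`) be
a free `R`-module.  Let `E` be the set of pairs `(m', Δ')` of a multiplication and a
comultiplication map on `M` lifting the fixed pair `(m₀, Δ₀)` modulo `p^n`.  Then the group
`Hom(A ⊗ A, A) ⊕ Hom(A, A ⊗ A)` of maps over the residue ring, realized as pairs `(μ, δ)`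
of `R`-module maps taken modulo `p`, acts freely and transitively on `E` by
`(μ, δ) ∘ (m', Δ') = (m' + p^n μ', Δ' + p^n δ')`:  the action preserves `E`, is transitive,
and `p^n μ' = p^n μ''` precisely when `μ', μ''` agree modulo `p` (so the action is
well-defined independently of the lifts and is free). -/
theorem statement18 (R : Type*) [CommRing R] (p : R) (n : ℕ)
    (hpn : p ^ (n + 1) = 0) (hann : ∀ x : R, p ^ n * x = 0 → ∃ y, x = p * y)
    (M : Type*) [AddCommGroup M] [Module R M] [Module.Free R M]
    (m₀ : M ⊗[R] M →ₗ[R] M) (Δ₀ : M →ₗ[R] M ⊗[R] M)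
    (E : Set ((M ⊗[R] M →ₗ[R] M) × (M →ₗ[R] M ⊗[R] M)))
    (hE : E = {e | LinearMap.range (e.1 - m₀) ≤ Ideal.span {p ^ n} • (⊤ : Submodule R M) ∧
      LinearMap.range (e.2 - Δ₀) ≤ Ideal.span {p ^ n} • (⊤ : Submodule R (M ⊗[R] M))}) :
    -- the action maps `E` to `E`
    (∀ e ∈ E, ∀ (μ : M ⊗[R] M →ₗ[R] M) (δ : M →ₗ[R] M ⊗[R] M),
        (e.1 + p ^ n • μ, e.2 + p ^ n • δ) ∈ E) ∧
    -- the action is transitive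
    (∀ e ∈ E, ∀ e' ∈ E, ∃ (μ : M ⊗[R] M →ₗ[R] M) (δ : M →ₗ[R] M ⊗[R] M),
        e'.1 = e.1 + p ^ n • μ ∧ e'.2 = e.2 + p ^ n • δ) ∧
    -- the action is well-defined (independent of the lifts) and free
    (∀ μ μ' : M ⊗[R] M →ₗ[R] M, p ^ n • μ = p ^ n • μ' ↔
        LinearMap.range (μ - μ') ≤ Ideal.span {p} • (⊤ : Submodule R M)) ∧
    (∀ δ δ' : M →ₗ[R] M ⊗[R] M, p ^ n • δ = p ^ n • δ' ↔
        LinearMap.range (δ - δ') ≤ Ideal.span {p} • (⊤ : Submodule R (M ⊗[R] M))) := by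
  subst hE
  refine ⟨?_, ?_, fun μ μ' => free_iff p n hpn hann μ μ',
    fun δ δ' => free_iff p n hpn hann δ δ'⟩
  · rintro e ⟨he1, he2⟩ μ δ
    constructor
    · rintro x ⟨z, rfl⟩
      have : (e.1 + p ^ n • μ - m₀) z = (e.1 - m₀) z + p ^ n • μ z := by
        simp only [LinearMap.sub_apply, LinearMap.add_apply, LinearMap.smul_apply]; abel
      rw [this]
      exact Submodule.add_mem _ (he1 ⟨z, rfl⟩)
        ((mem_span_smul_top_iff _ _).mpr ⟨μ z, rfl⟩)
    · rintro x ⟨z, rfl⟩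
      have : (e.2 + p ^ n • δ - Δ₀) z = (e.2 - Δ₀) z + p ^ n • δ z := by
        simp only [LinearMap.sub_apply, LinearMap.add_apply, LinearMap.smul_apply]; abel
      rw [this]
      exact Submodule.add_mem _ (he2 ⟨z, rfl⟩)
        ((mem_span_smul_top_iff _ _).mpr ⟨δ z, rfl⟩)
  · rintro e ⟨he1, he2⟩ e' ⟨he1', he2'⟩
    have hr1 : LinearMap.range (e'.1 - e.1) ≤ Ideal.span {p ^ n} • (⊤ : Submodule R M) := by
      rintro x ⟨z, rfl⟩
      have : (e'.1 - e.1) z = (e'.1 - m₀) z - (e.1 - m₀) z := by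
        simp only [LinearMap.sub_apply]; abel
      rw [this]
      exact Submodule.sub_mem _ (he1' ⟨z, rfl⟩) (he1 ⟨z, rfl⟩)
    have hr2 : LinearMap.range (e'.2 - e.2) ≤
        Ideal.span {p ^ n} • (⊤ : Submodule R (M ⊗[R] M)) := by
      rintro x ⟨z, rfl⟩
      have : (e'.2 - e.2) z = (e'.2 - Δ₀) z - (e.2 - Δ₀) z := by
        simp only [LinearMap.sub_apply]; abel
      rw [this]
      exact Submodule.sub_mem _ (he2' ⟨z, rfl⟩) (he2 ⟨z, rfl⟩)
    obtain ⟨μ, hμ⟩ := exists_smul_eq' (p ^ n) _ hr1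
    obtain ⟨δ, hδ⟩ := exists_smul_eq' (p ^ n) _ hr2
    exact ⟨μ, δ, by rw [← hμ]; abel, by rw [← hδ]; abel⟩
end
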